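/- For every positive integer n, the sum over k from 0 to n of (-2)^k * (n/(n+k)) * C(n+k, n-k) equals 0 if n is odd, and (-1)^{n/2} if n is even. -/

import Mathlib

open Finset

private def gg (n : ℕ) : ℚ := ∑ k ∈ range (n + 1), (-2 : ℚ) ^ k * (Nat.choose (n + k) (2 * k))
private def hh (n : ℕ) : ℚ := ∑ k ∈ range (n + 1), (-2 : ℚ) ^ k * (Nat.choose (n + k) (2 * k + 1))

private lemma gg_ext (n : ℕ) : gg n = ∑ k ∈ range (n + 2), (-2 : ℚ) ^ k * (Nat.choose (n + k) (2 * k)) := by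
  rw [Finset.sum_range_succ, Nat.choose_eq_zero_of_lt (by omega)]
  simp [gg]

private lemma hh_ext (n : ℕ) : hh n = ∑ k ∈ range (n + 2), (-2 : ℚ) ^ k * (Nat.choose (n + k) (2 * k + 1)) := by
  rw [Finset.sum_range_succ, Nat.choose_eq_zero_of_lt (by omega)]
  simp [hh]

private lemma hh_succ (n : ℕ) : hh (n + 1) = hh n + gg n := by
  rw [hh, gg_ext, hh_ext, ← Finset.sum_add_distrib]
  apply Finset.sum_congr rfl
  intro k _
  rw [show n + 1 + k = (n + k) + 1 from by ring, Nat.choose_succ_succ']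
  push_cast
  ring

private lemma gg_succ (n : ℕ) : gg (n + 1) = gg n - 2 * hh (n + 1) := by
  have h1 : gg (n + 1) = (∑ j ∈ range (n + 1),
      (-2 : ℚ) ^ (j + 1) * (Nat.choose (n + 1 + (j + 1)) (2 * (j + 1)))) + 1 := by
    rw [gg, Finset.sum_range_succ']
    norm_num
  have h2 : ∀ j ∈ range (n + 1), (-2 : ℚ) ^ (j + 1) * (Nat.choose (n + 1 + (j + 1)) (2 * (j + 1))) =
      (-2 : ℚ) ^ (j + 1) * (Nat.choose (n + 1 + j) (2 * j + 1))
      + (-2 : ℚ) ^ (j + 1) * (Nat.choose (n + (j + 1)) (2 * (j + 1))) := by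
    intro j _
    rw [show n + 1 + (j + 1) = (n + 1 + j) + 1 from by ring,
        show 2 * (j + 1) = (2 * j + 1) + 1 from by ring, Nat.choose_succ_succ']
    rw [show n + 1 + j = n + (j + 1) from by ring]
    push_cast
    ring
  rw [h1, Finset.sum_congr rfl h2, Finset.sum_add_distrib]
  have hhv : hh (n + 1) = ∑ j ∈ range (n + 1), (-2 : ℚ) ^ j * (Nat.choose (n + 1 + j) (2 * j + 1)) := by
    rw [hh, Finset.sum_range_succ _ (n + 1), Nat.choose_eq_zero_of_lt (by omega)]
    norm_num
  have h3 : ∑ j ∈ range (n + 1), (-2 : ℚ) ^ (j + 1) * (Nat.choose (n + 1 + j) (2 * j + 1))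
      = -2 * hh (n + 1) := by
    rw [hhv, Finset.mul_sum]
    apply Finset.sum_congr rfl
    intro j _
    ring
  have h4 : (∑ j ∈ range (n + 1), (-2 : ℚ) ^ (j + 1) * (Nat.choose (n + (j + 1)) (2 * (j + 1)))) + 1
      = gg n := by
    rw [gg_ext, Finset.sum_range_succ' (fun k => (-2 : ℚ) ^ k * (Nat.choose (n + k) (2 * k))) (n + 1)]
    congr 1
    simp
  rw [h3]
  linarith [h4]

private lemma closed (m : ℕ) : gg (2 * m) = (-1) ^ m ∧ hh (2 * m) = 0 ∧
    gg (2 * m + 1) = -(-1) ^ m ∧ hh (2 * m + 1) = (-1) ^ m := by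
  induction m with
  | zero =>
    refine ⟨?_, ?_, ?_, ?_⟩ <;> simp [gg, hh, Finset.sum_range_succ] <;> norm_num
  | succ m ih =>
    obtain ⟨h1, h2, h3, h4⟩ := ih
    have e1 : hh (2 * m + 2) = 0 := by
      rw [show 2 * m + 2 = (2 * m + 1) + 1 from rfl, hh_succ, h3, h4]; ring
    have e2 : gg (2 * m + 2) = (-1) ^ (m + 1) := by
      rw [show 2 * m + 2 = (2 * m + 1) + 1 from rfl, gg_succ, e1, h3]; ring
    have e3 : hh (2 * m + 3) = (-1) ^ (m + 1) := by
      rw [show 2 * m + 3 = (2 * m + 2) + 1 from rfl, hh_succ, e1, e2]; ring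
    have e4 : gg (2 * m + 3) = -(-1) ^ (m + 1) := by
      rw [show 2 * m + 3 = (2 * m + 2) + 1 from rfl, gg_succ, e3, e2]; ring
    refine ⟨?_, ?_, ?_, ?_⟩
    · rw [show 2 * (m + 1) = 2 * m + 2 from by ring]; exact e2
    · rw [show 2 * (m + 1) = 2 * m + 2 from by ring]; exact e1
    · rw [show 2 * (m + 1) + 1 = 2 * m + 3 from by ring]; exact e4
    · rw [show 2 * (m + 1) + 1 = 2 * m + 3 from by ring]; exact e3

private lemma term_eq (n j : ℕ) (hj : j + 1 ≤ n) :
    (-2 : ℚ) ^ (j + 1) * ((n : ℚ) / (n + (j + 1))) * (Nat.choose (n + (j + 1)) (2 * (j + 1))) =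
    (-2 : ℚ) ^ (j + 1) * (Nat.choose (n + j) (2 * j + 2)) - (-2 : ℚ) ^ j * (Nat.choose (n + j) (2 * j + 1)) := by
  have hP : Nat.choose (n + (j + 1)) (2 * (j + 1)) =
      Nat.choose (n + j) (2 * j + 1) + Nat.choose (n + j) (2 * j + 2) := by
    rw [show n + (j + 1) = (n + j) + 1 from by ring,
        show 2 * (j + 1) = (2 * j + 1) + 1 from by ring, Nat.choose_succ_succ']
  have key : Nat.choose (n + j) (2 * j + 2) * (2 * j + 2) =
      Nat.choose (n + j) (2 * j + 1) * (n - (j + 1)) := by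
    have := Nat.choose_succ_right_eq (n + j) (2 * j + 1)
    rwa [show n + j - (2 * j + 1) = n - (j + 1) from by omega] at this
  have keyQ : (Nat.choose (n + j) (2 * j + 2) : ℚ) * (2 * (j:ℚ) + 2) =
      (Nat.choose (n + j) (2 * j + 1) : ℚ) * ((n : ℚ) - ((j:ℚ) + 1)) := by
    have h2 := congrArg (Nat.cast : ℕ → ℚ) key
    push_cast [Nat.cast_sub hj] at h2
    linarith [h2]
  have hne : (n : ℚ) + ((j:ℚ) + 1) ≠ 0 := by positivity
  rw [hP]
  push_cast
  field_simp
  linear_combination ((-2:ℚ)^j) * keyQ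

theorem stmt_3 (n : ℕ) (hn : 0 < n) :
    ∑ k ∈ range (n + 1), (-2 : ℚ) ^ k * ((n : ℚ) / (n + k)) *
      (Nat.choose (n + k) (n - k)) =
    if Even n then (-1 : ℚ) ^ (n / 2) else 0 := by
  obtain ⟨m, rfl⟩ : ∃ m, n = m + 1 := ⟨n - 1, by omega⟩
  have hS : ∑ k ∈ range (m + 1 + 1), (-2 : ℚ) ^ k * (((m + 1 : ℕ) : ℚ) / ((m + 1 : ℕ) + k)) *
      (Nat.choose (m + 1 + k) (m + 1 - k)) = - hh m := by
    have step1 : ∀ k ∈ range (m + 2), (-2 : ℚ) ^ k * (((m + 1 : ℕ) : ℚ) / ((m + 1 : ℕ) + k)) *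
        (Nat.choose (m + 1 + k) (m + 1 - k)) =
        (-2 : ℚ) ^ k * (((m + 1 : ℕ) : ℚ) / ((m + 1 : ℕ) + k)) * (Nat.choose (m + 1 + k) (2 * k)) := by
      intro k hk
      simp only [Finset.mem_range] at hk
      rw [show m + 1 - k = (m + 1 + k) - 2 * k from by omega, Nat.choose_symm (by omega)]
    rw [Finset.sum_congr rfl step1, Finset.sum_range_succ']
    have step2 : ∀ j ∈ range (m + 1), (-2 : ℚ) ^ (j + 1) * (((m + 1 : ℕ) : ℚ) / ((m + 1 : ℕ) + (j + 1 : ℕ))) *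
        (Nat.choose (m + 1 + (j + 1)) (2 * (j + 1))) =
        (-2 : ℚ) ^ (j + 1) * (Nat.choose (m + 1 + j) (2 * j + 2)) - (-2 : ℚ) ^ j * (Nat.choose (m + 1 + j) (2 * j + 1)) := by
      intro j hj
      simp only [Finset.mem_range] at hj
      have := term_eq (m + 1) j (by omega)
      rw [show (m : ℕ) + 1 + j = m + 1 + j from rfl] at this
      convert this using 3
      push_cast
      ring
    rw [Finset.sum_congr rfl step2, Finset.sum_sub_distrib]
    have h3 : ∑ j ∈ range (m + 1), (-2 : ℚ) ^ j * (Nat.choose (m + 1 + j) (2 * j + 1)) = hh (m + 1) := by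
      rw [hh, Finset.sum_range_succ _ (m + 1), Nat.choose_eq_zero_of_lt (by omega)]
      norm_num
    have h4 : (∑ j ∈ range (m + 1), (-2 : ℚ) ^ (j + 1) * (Nat.choose (m + 1 + j) (2 * j + 2)))
        + ((-2 : ℚ) ^ 0 * (((m + 1 : ℕ) : ℚ) / ((m + 1 : ℕ) + (0 : ℕ))) * (Nat.choose (m + 1 + 0) (2 * 0)))
        = gg m := by
      rw [gg_ext, Finset.sum_range_succ' (fun k => (-2 : ℚ) ^ k * (Nat.choose (m + k) (2 * k))) (m + 1)]
      congr 1
      · apply Finset.sum_congr rfl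
        intro j _
        rw [show m + (j + 1) = m + 1 + j from by ring, show 2 * (j + 1) = 2 * j + 2 from by ring]
      · have hpos : ((m : ℚ) + 1) ≠ 0 := by positivity
        push_cast
        field_simp
        simp
    rw [h3, hh_succ]
    push_cast at h4 ⊢
    linarith [h4]
  push_cast at hS ⊢
  rw [hS]
  rcases Nat.even_or_odd m with ⟨t, rfl⟩ | ⟨t, rfl⟩
  · have h2 : hh (2 * t) = 0 := (closed t).2.1
    rw [show t + t = 2 * t from by ring, h2]
    have : ¬ Even (2 * t + 1) := by simp [Nat.even_add_one, parity_simps]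
    simp [this]
  · have h4 : hh (2 * t + 1) = (-1) ^ t := (closed t).2.2.2
    rw [h4]
    have he : Even (2 * t + 1 + 1) := ⟨t + 1, by ring⟩
    rw [if_pos he, show (2 * t + 1 + 1) / 2 = t + 1 from by omega]
    ring
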